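/- Let μ be a probability measure and f ∈ L^q(μ) for some q > 2 with f ≥ 0. Then ∫ f² log(f²/‖f‖²_{L²_μ}) dμ ≤ (q/(q-2)) ‖f - μf‖²_{L^q_μ} + ((q-4)/(q-2)) ‖f - μf‖²_{L²_μ}, where μf = ∫ f dμ. -/

import Mathlib

open Real MeasureTheory

set_option maxHeartbeats 1000000

noncomputable def lsP0 (x : ℝ) : ℝ :=
  2*(1+x)^2*Real.log (1+x) + (1+2*x/3)*Real.log (1+2*x/3)
    - (x^2+2*x/3+1)*Real.log (x^2+2*x/3+1) - 2*x^2 - 2*x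

noncomputable def lsP1 (x : ℝ) : ℝ :=
  4*(1+x)*Real.log (1+x) + (2/3)*Real.log (1+2*x/3)
    - (2*x+2/3)*Real.log (x^2+2*x/3+1) - 4*x

noncomputable def lsP2 (x : ℝ) : ℝ :=
  4*Real.log (1+x) + (4/9)/(1+2*x/3) - 2*Real.log (x^2+2*x/3+1)
    - (2*x+2/3)^2/(x^2+2*x/3+1)

noncomputable def lsP3 (x : ℝ) : ℝ :=
  4/(1+x) - (8/27)/(1+2*x/3)^2 - 6*(2*x+2/3)/(x^2+2*x/3+1)
    + (2*x+2/3)^3/(x^2+2*x/3+1)^2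

lemma lsA_pos (x : ℝ) : 0 < x^2+2*x/3+1 := by nlinarith [sq_nonneg (x + 1/3)]

lemma lsB_pos {x : ℝ} (hx : -1 < x) : 0 < 1+2*x/3 := by linarith

lemma lsHD0 {x : ℝ} (hx : -1 < x) : HasDerivAt lsP0 (lsP1 x) x := by
  have h1 : (0:ℝ) < 1 + x := by linarith
  have hB := lsB_pos hx
  have hA := lsA_pos x
  have d1 : HasDerivAt (fun x : ℝ => 1 + x) 1 x := by
    simpa using (hasDerivAt_id x).const_add 1
  have d2 : HasDerivAt (fun x : ℝ => 1 + 2*x/3) (2/3) x := by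
    have h : HasDerivAt (fun x : ℝ => 2*x/3) (2/3) x := by
      convert ((hasDerivAt_id x).const_mul (2:ℝ)).div_const 3 using 1
      rfl
      rfl
      rfl
      norm_num
    simpa using h.const_add 1
  have d3 : HasDerivAt (fun x : ℝ => x^2+2*x/3+1) (2*x+2/3) x := by
    have hsq : HasDerivAt (fun x : ℝ => x^2) (2*x) x := by
      simpa using hasDerivAt_pow 2 x
    have hl : HasDerivAt (fun x : ℝ => 2*x/3) (2/3) x := by
      convert ((hasDerivAt_id x).const_mul (2:ℝ)).div_const 3 using 1
      rfl
      rfl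
      rfl
      norm_num
    simpa using (hsq.add hl).add_const 1
  have dl1 : HasDerivAt (fun x : ℝ => Real.log (1+x)) (1/(1+x)) x := by
    have := (Real.hasDerivAt_log h1.ne').comp x d1
    simpa [div_eq_mul_inv, mul_comm, Function.comp_def] using this
  have dl2 : HasDerivAt (fun x : ℝ => Real.log (1+2*x/3)) ((2/3)/(1+2*x/3)) x := by
    have := (Real.hasDerivAt_log hB.ne').comp x d2
    simpa [div_eq_mul_inv, mul_comm, Function.comp_def] using this
  have dl3 : HasDerivAt (fun x : ℝ => Real.log (x^2+2*x/3+1)) ((2*x+2/3)/(x^2+2*x/3+1)) x := by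
    have := (Real.hasDerivAt_log hA.ne').comp x d3
    simpa [div_eq_mul_inv, mul_comm, Function.comp_def] using this
  have dsq : HasDerivAt (fun x : ℝ => 2*(1+x)^2) (4*(1+x)) x := by
    have h := (d1.pow 2).const_mul (2:ℝ)
    convert h using 1
    rfl
    rfl
    rfl
    push_cast
    ring
  have T1 : HasDerivAt (fun x : ℝ => 2*(1+x)^2*Real.log (1+x))
      (4*(1+x)*Real.log (1+x) + 2*(1+x)^2*(1/(1+x))) x := dsq.mul dl1
  have T2 : HasDerivAt (fun x : ℝ => (1+2*x/3)*Real.log (1+2*x/3))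
      ((2/3)*Real.log (1+2*x/3) + (1+2*x/3)*((2/3)/(1+2*x/3))) x := d2.mul dl2
  have T3 : HasDerivAt (fun x : ℝ => (x^2+2*x/3+1)*Real.log (x^2+2*x/3+1))
      ((2*x+2/3)*Real.log (x^2+2*x/3+1) + (x^2+2*x/3+1)*((2*x+2/3)/(x^2+2*x/3+1))) x :=
    d3.mul dl3
  have T4 : HasDerivAt (fun x : ℝ => 2*x^2 + 2*x) (4*x + 2) x := by
    have hsq : HasDerivAt (fun x : ℝ => x^2) (2*x) x := by
      simpa using hasDerivAt_pow 2 x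
    have h := (hsq.const_mul (2:ℝ)).add ((hasDerivAt_id x).const_mul (2:ℝ))
    convert h using 1
    rfl
    rfl
    rfl
    ring
  have hsum := ((T1.add T2).sub T3).sub T4
  have heq : lsP0 = fun x : ℝ => (2*(1+x)^2*Real.log (1+x) + (1+2*x/3)*Real.log (1+2*x/3)
      - (x^2+2*x/3+1)*Real.log (x^2+2*x/3+1)) - (2*x^2 + 2*x) := by
    funext y; simp only [lsP0]; ring
  have e1 : 2*(1+x)^2*(1/(1+x)) = 2*(1+x) := by
    field_simp [h1.ne']
  have e2 : (1+2*x/3)*((2/3)/(1+2*x/3)) = 2/3 := by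
    rw [mul_comm, div_mul_cancel₀ _ hB.ne']
  have e3 : (x^2+2*x/3+1)*((2*x+2/3)/(x^2+2*x/3+1)) = 2*x+2/3 := by
    rw [mul_comm, div_mul_cancel₀ _ hA.ne']
  have hval : 4*(1+x)*Real.log (1+x) + 2*(1+x)^2*(1/(1+x))
      + ((2/3)*Real.log (1+2*x/3) + (1+2*x/3)*((2/3)/(1+2*x/3)))
      - ((2*x+2/3)*Real.log (x^2+2*x/3+1) + (x^2+2*x/3+1)*((2*x+2/3)/(x^2+2*x/3+1)))
      - (4*x+2) = lsP1 x := by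
    rw [e1, e2, e3]; unfold lsP1; ring
  rw [heq]
  exact hval ▸ hsum

lemma lsHD1 {x : ℝ} (hx : -1 < x) : HasDerivAt lsP1 (lsP2 x) x := by
  have h1 : (0:ℝ) < 1 + x := by linarith
  have hB := lsB_pos hx
  have hA := lsA_pos x
  have d1 : HasDerivAt (fun x : ℝ => 1 + x) 1 x := by
    simpa using (hasDerivAt_id x).const_add 1
  have d2 : HasDerivAt (fun x : ℝ => 1 + 2*x/3) (2/3) x := by
    have h : HasDerivAt (fun x : ℝ => 2*x/3) (2/3) x := by
      convert ((hasDerivAt_id x).const_mul (2:ℝ)).div_const 3 using 1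
      rfl
      rfl
      rfl
      norm_num
    simpa using h.const_add 1
  have d3 : HasDerivAt (fun x : ℝ => x^2+2*x/3+1) (2*x+2/3) x := by
    have hsq : HasDerivAt (fun x : ℝ => x^2) (2*x) x := by
      simpa using hasDerivAt_pow 2 x
    have hl : HasDerivAt (fun x : ℝ => 2*x/3) (2/3) x := by
      convert ((hasDerivAt_id x).const_mul (2:ℝ)).div_const 3 using 1
      rfl
      rfl
      rfl
      norm_num
    simpa using (hsq.add hl).add_const 1
  have dl1 : HasDerivAt (fun x : ℝ => Real.log (1+x)) (1/(1+x)) x := by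
    have := (Real.hasDerivAt_log h1.ne').comp x d1
    simpa [div_eq_mul_inv, mul_comm, Function.comp_def] using this
  have dl2 : HasDerivAt (fun x : ℝ => Real.log (1+2*x/3)) ((2/3)/(1+2*x/3)) x := by
    have := (Real.hasDerivAt_log hB.ne').comp x d2
    simpa [div_eq_mul_inv, mul_comm, Function.comp_def] using this
  have dl3 : HasDerivAt (fun x : ℝ => Real.log (x^2+2*x/3+1)) ((2*x+2/3)/(x^2+2*x/3+1)) x := by
    have := (Real.hasDerivAt_log hA.ne').comp x d3
    simpa [div_eq_mul_inv, mul_comm, Function.comp_def] using this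
  have d4 : HasDerivAt (fun x : ℝ => 4*(1+x)) 4 x := by
    convert d1.const_mul (4:ℝ) using 1
    rfl
    rfl
    norm_num
  have dc : HasDerivAt (fun x : ℝ => 2*x+2/3) 2 x := by
    have h : HasDerivAt (fun x : ℝ => 2*x) 2 x := by
      convert (hasDerivAt_id x).const_mul (2:ℝ) using 1
      rfl
      rfl
      rfl
      norm_num
    simpa using h.add_const (2/3 : ℝ)
  have T1 : HasDerivAt (fun x : ℝ => 4*(1+x)*Real.log (1+x))
      (4*Real.log (1+x) + 4*(1+x)*(1/(1+x))) x := d4.mul dl1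
  have T2 : HasDerivAt (fun x : ℝ => (2/3)*Real.log (1+2*x/3))
      ((2/3)*((2/3)/(1+2*x/3))) x := dl2.const_mul (2/3)
  have T3 : HasDerivAt (fun x : ℝ => (2*x+2/3)*Real.log (x^2+2*x/3+1))
      (2*Real.log (x^2+2*x/3+1) + (2*x+2/3)*((2*x+2/3)/(x^2+2*x/3+1))) x := dc.mul dl3
  have T4 : HasDerivAt (fun x : ℝ => 4*x) 4 x := by
    convert (hasDerivAt_id x).const_mul (4:ℝ) using 1
    rfl
    rfl
    rfl
    norm_num
  have hsum := ((T1.add T2).sub T3).sub T4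
  have heq : lsP1 = fun x : ℝ => (4*(1+x)*Real.log (1+x) + (2/3)*Real.log (1+2*x/3)
      - (2*x+2/3)*Real.log (x^2+2*x/3+1)) - 4*x := by
    funext y; simp only [lsP1]; try ring
  have e1 : 4*(1+x)*(1/(1+x)) = 4 := by
    field_simp
  have e2 : (2/3)*((2/3)/(1+2*x/3)) = (4/9)/(1+2*x/3) := by
    rw [mul_div_assoc']; norm_num
  have e3 : (2*x+2/3)*((2*x+2/3)/(x^2+2*x/3+1)) = (2*x+2/3)^2/(x^2+2*x/3+1) := by
    rw [mul_div_assoc', ← pow_two]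
  have hval : 4*Real.log (1+x) + 4*(1+x)*(1/(1+x)) + (2/3)*((2/3)/(1+2*x/3))
      - (2*Real.log (x^2+2*x/3+1) + (2*x+2/3)*((2*x+2/3)/(x^2+2*x/3+1))) - 4 = lsP2 x := by
    rw [e1, e2, e3]; unfold lsP2; ring
  rw [heq]
  have h := hsum
  rw [hval] at h
  exact h

lemma lsHD2 {x : ℝ} (hx : -1 < x) : HasDerivAt lsP2 (lsP3 x) x := by
  have h1 : (0:ℝ) < 1 + x := by linarith
  have hB := lsB_pos hx
  have hA := lsA_pos x
  have d1 : HasDerivAt (fun x : ℝ => 1 + x) 1 x := by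
    simpa using (hasDerivAt_id x).const_add 1
  have d2 : HasDerivAt (fun x : ℝ => 1 + 2*x/3) (2/3) x := by
    have h : HasDerivAt (fun x : ℝ => 2*x/3) (2/3) x := by
      convert ((hasDerivAt_id x).const_mul (2:ℝ)).div_const 3 using 1
      rfl
      rfl
      rfl
      norm_num
    simpa using h.const_add 1
  have d3 : HasDerivAt (fun x : ℝ => x^2+2*x/3+1) (2*x+2/3) x := by
    have hsq : HasDerivAt (fun x : ℝ => x^2) (2*x) x := by
      simpa using hasDerivAt_pow 2 x
    have hl : HasDerivAt (fun x : ℝ => 2*x/3) (2/3) x := by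
      convert ((hasDerivAt_id x).const_mul (2:ℝ)).div_const 3 using 1
      rfl
      rfl
      rfl
      norm_num
    simpa using (hsq.add hl).add_const 1
  have dl1 : HasDerivAt (fun x : ℝ => Real.log (1+x)) (1/(1+x)) x := by
    have := (Real.hasDerivAt_log h1.ne').comp x d1
    simpa [div_eq_mul_inv, mul_comm, Function.comp_def] using this
  have dl3 : HasDerivAt (fun x : ℝ => Real.log (x^2+2*x/3+1)) ((2*x+2/3)/(x^2+2*x/3+1)) x := by
    have := (Real.hasDerivAt_log hA.ne').comp x d3
    simpa [div_eq_mul_inv, mul_comm, Function.comp_def] using this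
  have dc : HasDerivAt (fun x : ℝ => 2*x+2/3) 2 x := by
    have h : HasDerivAt (fun x : ℝ => 2*x) 2 x := by
      convert (hasDerivAt_id x).const_mul (2:ℝ) using 1
      rfl
      rfl
      rfl
      norm_num
    simpa using h.add_const (2/3 : ℝ)
  have T1 : HasDerivAt (fun x : ℝ => 4*Real.log (1+x)) (4*(1/(1+x))) x :=
    dl1.const_mul 4
  have T2 : HasDerivAt (fun x : ℝ => (4/9)/(1+2*x/3))
      ((0*(1+2*x/3) - (4/9)*(2/3))/(1+2*x/3)^2) x :=
    (hasDerivAt_const x (4/9:ℝ)).div d2 hB.ne'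
  have T3 : HasDerivAt (fun x : ℝ => 2*Real.log (x^2+2*x/3+1))
      (2*((2*x+2/3)/(x^2+2*x/3+1))) x := dl3.const_mul 2
  have dnum : HasDerivAt (fun x : ℝ => (2*x+2/3)^2) (4*(2*x+2/3)) x := by
    have := dc.pow 2
    convert this using 1
    rfl
    rfl
    rfl
    push_cast
    ring
  have T4 : HasDerivAt (fun x : ℝ => (2*x+2/3)^2/(x^2+2*x/3+1))
      ((4*(2*x+2/3)*(x^2+2*x/3+1) - (2*x+2/3)^2*(2*x+2/3))/(x^2+2*x/3+1)^2) x :=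
    dnum.div d3 hA.ne'
  have hsum := ((T1.add T2).sub T3).sub T4
  have heq : lsP2 = fun x : ℝ => (4*Real.log (1+x) + (4/9)/(1+2*x/3))
      - 2*Real.log (x^2+2*x/3+1) - (2*x+2/3)^2/(x^2+2*x/3+1) := by
    funext y; simp only [lsP2]; try ring
  have e1 : 4*(1/(1+x)) = 4/(1+x) := by rw [mul_one_div]
  have e2 : (0*(1+2*x/3) - 4/9*(2/3))/(1+2*x/3)^2 = -((8/27)/(1+2*x/3)^2) := by
    rw [show (0*(1+2*x/3) - 4/9*(2/3)) = -(8/27 : ℝ) by ring, neg_div]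
  have e3gen : ∀ (c A : ℝ), A ≠ 0 → (4*c*A - c^2*c)/A^2 = 4*(c/A) - c^3/A^2 := by
    intro c A hA0
    field_simp
  have e3 := e3gen (2*x+2/3) (x^2+2*x/3+1) hA.ne'
  have hval : 4*(1/(1+x)) + (0*(1+2*x/3) - 4/9*(2/3))/(1+2*x/3)^2
      - 2*((2*x+2/3)/(x^2+2*x/3+1))
      - (4*(2*x+2/3)*(x^2+2*x/3+1) - (2*x+2/3)^2*(2*x+2/3))/(x^2+2*x/3+1)^2
      = lsP3 x := by
    rw [e1, e2, e3]; unfold lsP3; ring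
  rw [heq]
  have h := hsum
  rw [hval] at h
  exact h

lemma lsQ_pos {x : ℝ} (hx : -1 < x) :
    0 < 120*x^4+568*x^3+1352*x^2+1704*x+864 := by
  have hu : (0:ℝ) < 1+x := by linarith
  nlinarith [pow_pos hu 4, pow_pos hu 3, pow_pos hu 2, hu]

lemma lsP3_key {x : ℝ} (hx : -1 < x) :
    lsP3 x * ((1+x)*(1+2*x/3)^2*(x^2+2*x/3+1)^2)
      = -(x*(120*x^4+568*x^3+1352*x^2+1704*x+864))/81 := by
  have h1 : (0:ℝ) < 1 + x := by linarith
  have hB := lsB_pos hx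
  have hA := lsA_pos x
  have e1 : 4/(1+x) * ((1+x)*(1+2*x/3)^2*(x^2+2*x/3+1)^2)
      = 4*((1+2*x/3)^2*(x^2+2*x/3+1)^2) := by
    rw [div_mul_eq_mul_div, div_eq_iff h1.ne']
    ring
  have e2 : (8/27)/(1+2*x/3)^2 * ((1+x)*(1+2*x/3)^2*(x^2+2*x/3+1)^2)
      = (8/27)*((1+x)*(x^2+2*x/3+1)^2) := by
    rw [div_mul_eq_mul_div, div_eq_iff (pow_ne_zero 2 hB.ne')]
    ring
  have e3 : 6*(2*x+2/3)/(x^2+2*x/3+1) * ((1+x)*(1+2*x/3)^2*(x^2+2*x/3+1)^2)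
      = 6*(2*x+2/3)*((1+x)*(1+2*x/3)^2*(x^2+2*x/3+1)) := by
    rw [div_mul_eq_mul_div, div_eq_iff hA.ne']
    ring
  have e4 : (2*x+2/3)^3/(x^2+2*x/3+1)^2 * ((1+x)*(1+2*x/3)^2*(x^2+2*x/3+1)^2)
      = (2*x+2/3)^3*((1+x)*(1+2*x/3)^2) := by
    rw [div_mul_eq_mul_div, div_eq_iff (pow_ne_zero 2 hA.ne')]
    ring
  unfold lsP3
  rw [add_mul, sub_mul, sub_mul, e1, e2, e3, e4]
  ring

lemma lsP3_nonpos {x : ℝ} (hx : 0 ≤ x) : lsP3 x ≤ 0 := by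
  have hx1 : (-1:ℝ) < x := by linarith
  have h1 : (0:ℝ) < 1 + x := by linarith
  have hB := lsB_pos hx1
  have hA := lsA_pos x
  have hD : 0 < (1+x)*(1+2*x/3)^2*(x^2+2*x/3+1)^2 := by positivity
  have hQ := lsQ_pos hx1
  have hk := lsP3_key hx1
  nlinarith [mul_nonneg hx hQ.le]

lemma lsP3_nonneg {x : ℝ} (hx : -1 < x) (hx0 : x ≤ 0) : 0 ≤ lsP3 x := by
  have h1 : (0:ℝ) < 1 + x := by linarith
  have hB := lsB_pos hx
  have hA := lsA_pos x
  have hD : 0 < (1+x)*(1+2*x/3)^2*(x^2+2*x/3+1)^2 := by positivity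
  have hQ := lsQ_pos hx
  have hk := lsP3_key hx
  nlinarith [mul_nonneg (neg_nonneg.mpr hx0) hQ.le]

lemma lsP0_zero : lsP0 0 = 0 := by unfold lsP0; norm_num
lemma lsP1_zero : lsP1 0 = 0 := by unfold lsP1; norm_num
lemma lsP2_zero : lsP2 0 = 0 := by unfold lsP2; norm_num

lemma lsP0_nonpos {x : ℝ} (hx : -1 < x) : lsP0 x ≤ 0 := by
  rcases le_or_gt 0 x with h | h
  · -- x ≥ 0 : work on Ici 0
    have hsub : ∀ y : ℝ, y ∈ Set.Ici (0:ℝ) → (-1:ℝ) < y := fun y hy => by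
      simp only [Set.mem_Ici] at hy; linarith
    have hint : interior (Set.Ici (0:ℝ)) = Set.Ioi 0 := interior_Ici
    have m2 : AntitoneOn lsP2 (Set.Ici 0) := by
      apply antitoneOn_of_deriv_nonpos (convex_Ici 0)
      · exact fun y hy => (lsHD2 (hsub y hy)).continuousAt.continuousWithinAt
      · intro y hy
        rw [hint] at hy
        exact (lsHD2 (hsub y (Set.mem_Ici.mpr (le_of_lt hy)))).differentiableAt.differentiableWithinAt
      · intro y hy
        rw [hint] at hy
        rw [(lsHD2 (hsub y (Set.mem_Ici.mpr (le_of_lt hy)))).deriv]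
        exact lsP3_nonpos (le_of_lt hy)
    have h2 : ∀ y : ℝ, 0 ≤ y → lsP2 y ≤ 0 := by
      intro y hy
      have := m2 (Set.mem_Ici.mpr le_rfl) (Set.mem_Ici.mpr hy) hy
      simpa [lsP2_zero] using this
    have m1 : AntitoneOn lsP1 (Set.Ici 0) := by
      apply antitoneOn_of_deriv_nonpos (convex_Ici 0)
      · exact fun y hy => (lsHD1 (hsub y hy)).continuousAt.continuousWithinAt
      · intro y hy
        rw [hint] at hy
        exact (lsHD1 (hsub y (Set.mem_Ici.mpr (le_of_lt hy)))).differentiableAt.differentiableWithinAt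
      · intro y hy
        rw [hint] at hy
        rw [(lsHD1 (hsub y (Set.mem_Ici.mpr (le_of_lt hy)))).deriv]
        exact h2 y (le_of_lt hy)
    have h1 : ∀ y : ℝ, 0 ≤ y → lsP1 y ≤ 0 := by
      intro y hy
      have := m1 (Set.mem_Ici.mpr le_rfl) (Set.mem_Ici.mpr hy) hy
      simpa [lsP1_zero] using this
    have m0 : AntitoneOn lsP0 (Set.Ici 0) := by
      apply antitoneOn_of_deriv_nonpos (convex_Ici 0)
      · exact fun y hy => (lsHD0 (hsub y hy)).continuousAt.continuousWithinAt
      · intro y hy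
        rw [hint] at hy
        exact (lsHD0 (hsub y (Set.mem_Ici.mpr (le_of_lt hy)))).differentiableAt.differentiableWithinAt
      · intro y hy
        rw [hint] at hy
        rw [(lsHD0 (hsub y (Set.mem_Ici.mpr (le_of_lt hy)))).deriv]
        exact h1 y (le_of_lt hy)
    have := m0 (Set.mem_Ici.mpr le_rfl) (Set.mem_Ici.mpr h) h
    simpa [lsP0_zero] using this
  · -- -1 < x < 0 : work on Ioc (-1) 0
    have hsub : ∀ y : ℝ, y ∈ Set.Ioc (-1:ℝ) 0 → (-1:ℝ) < y := fun y hy => hy.1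
    have hint : interior (Set.Ioc (-1:ℝ) 0) = Set.Ioo (-1) 0 := interior_Ioc
    have hx0 : x ∈ Set.Ioc (-1:ℝ) 0 := ⟨hx, le_of_lt h⟩
    have h0mem : (0:ℝ) ∈ Set.Ioc (-1:ℝ) 0 := ⟨by norm_num, le_rfl⟩
    have m2 : MonotoneOn lsP2 (Set.Ioc (-1:ℝ) 0) := by
      apply monotoneOn_of_deriv_nonneg (convex_Ioc (-1) 0)
      · exact fun y hy => (lsHD2 (hsub y hy)).continuousAt.continuousWithinAt
      · intro y hy
        rw [hint] at hy
        exact (lsHD2 hy.1).differentiableAt.differentiableWithinAt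
      · intro y hy
        rw [hint] at hy
        rw [(lsHD2 hy.1).deriv]
        exact lsP3_nonneg hy.1 (le_of_lt hy.2)
    have h2 : ∀ y : ℝ, y ∈ Set.Ioc (-1:ℝ) 0 → lsP2 y ≤ 0 := by
      intro y hy
      have := m2 hy h0mem hy.2
      simpa [lsP2_zero] using this
    have m1 : AntitoneOn lsP1 (Set.Ioc (-1:ℝ) 0) := by
      apply antitoneOn_of_deriv_nonpos (convex_Ioc (-1) 0)
      · exact fun y hy => (lsHD1 (hsub y hy)).continuousAt.continuousWithinAt
      · intro y hy
        rw [hint] at hy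
        exact (lsHD1 hy.1).differentiableAt.differentiableWithinAt
      · intro y hy
        rw [hint] at hy
        rw [(lsHD1 hy.1).deriv]
        exact h2 y ⟨hy.1, le_of_lt hy.2⟩
    have h1 : ∀ y : ℝ, y ∈ Set.Ioc (-1:ℝ) 0 → 0 ≤ lsP1 y := by
      intro y hy
      have := m1 hy h0mem hy.2
      simpa [lsP1_zero] using this
    have m0 : MonotoneOn lsP0 (Set.Ioc (-1:ℝ) 0) := by
      apply monotoneOn_of_deriv_nonneg (convex_Ioc (-1) 0)
      · exact fun y hy => (lsHD0 (hsub y hy)).continuousAt.continuousWithinAt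
      · intro y hy
        rw [hint] at hy
        exact (lsHD0 hy.1).differentiableAt.differentiableWithinAt
      · intro y hy
        rw [hint] at hy
        rw [(lsHD0 hy.1).deriv]
        exact h1 y ⟨hy.1, le_of_lt hy.2⟩
    have := m0 hx0 h0mem (le_of_lt h)
    simpa [lsP0_zero] using this

lemma lsKey {s x : ℝ} (hs : 0 < s) (hx : -1 ≤ x) :
    (1+x)^2 * Real.log ((1+x)^2/(1+s)) ≤
      x^2*Real.log (x^2/s) + 2*x^2 + (2 - (4/3)*Real.log (1+s))*x := by
  have h1s : (0:ℝ) < 1 + s := by linarith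
  rcases eq_or_lt_of_le hx with heq | hx1
  · -- x = -1
    rw [← heq]
    have e0 : ((1:ℝ)+(-1))^2 = 0 := by norm_num
    rw [e0]
    have hlogs : Real.log s ≤ Real.log (1+s) := Real.log_le_log hs (by linarith)
    have hlog1s : 0 ≤ Real.log (1+s) := Real.log_nonneg (by linarith)
    have e1 : ((-1:ℝ))^2 = 1 := by norm_num
    rw [e1]
    rw [one_div, Real.log_inv]
    nlinarith [hlogs, hlog1s]
  · rcases eq_or_ne x 0 with hx0 | hx0
    · subst hx0
      have e0 : ((1:ℝ)+0)^2 = 1 := by norm_num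
      rw [e0, one_div, Real.log_inv]
      have hlog1s : 0 ≤ Real.log (1+s) := Real.log_nonneg (by linarith)
      nlinarith [hlog1s]
    · -- main case
      have hA := lsA_pos x
      have hB := lsB_pos hx1
      have h1x : (0:ℝ) < 1 + x := by linarith
      have hx2 : (0:ℝ) < x^2 := by positivity
      have hpA : x^2 < x^2+2*x/3+1 := by linarith
      have hp0 : (0:ℝ) < x^2/(x^2+2*x/3+1) := div_pos hx2 hA
      have hp1 : x^2/(x^2+2*x/3+1) < 1 := (div_lt_one hA).mpr hpA
      have hq0 : (0:ℝ) < 1 - x^2/(x^2+2*x/3+1) := by linarith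
      have hsp : (0:ℝ) < s/(x^2/(x^2+2*x/3+1)) := div_pos hs hp0
      have hq1 : (0:ℝ) < 1/(1 - x^2/(x^2+2*x/3+1)) := div_pos one_pos hq0
      have hgm := Real.geom_mean_le_arith_mean2_weighted hp0.le hq0.le hsp.le hq1.le
        (by ring)
      have hrhs : (x^2/(x^2+2*x/3+1))*(s/(x^2/(x^2+2*x/3+1)))
          + (1 - x^2/(x^2+2*x/3+1))*(1/(1 - x^2/(x^2+2*x/3+1))) = 1+s := by
        rw [mul_div_cancel₀ _ hp0.ne', mul_one_div_cancel hq0.ne']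
        ring
      rw [hrhs] at hgm
      have hL1 : (0:ℝ) < (s/(x^2/(x^2+2*x/3+1)))^(x^2/(x^2+2*x/3+1)) :=
        Real.rpow_pos_of_pos hsp _
      have hL2 : (0:ℝ) < (1/(1 - x^2/(x^2+2*x/3+1)))^(1 - x^2/(x^2+2*x/3+1)) :=
        Real.rpow_pos_of_pos hq1 _
      have hlog := Real.log_le_log (mul_pos hL1 hL2) hgm
      rw [Real.log_mul hL1.ne' hL2.ne', Real.log_rpow hsp, Real.log_rpow hq1] at hlog
      rw [Real.log_div hs.ne' hp0.ne', one_div, Real.log_inv] at hlog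
      -- hlog : p*(log s - log p) + (1-p)*(-log(1-p)) ≤ log(1+s)
      have hmul := mul_le_mul_of_nonneg_left hlog hA.le
      have hlogp : Real.log (x^2/(x^2+2*x/3+1))
          = Real.log (x^2) - Real.log (x^2+2*x/3+1) :=
        Real.log_div hx2.ne' hA.ne'
      have h1p : 1 - x^2/(x^2+2*x/3+1) = (1+2*x/3)/(x^2+2*x/3+1) := by
        rw [eq_div_iff hA.ne', sub_mul, div_mul_cancel₀ _ hA.ne', one_mul]
        ring
      have hlog1p : Real.log (1 - x^2/(x^2+2*x/3+1))
          = Real.log (1+2*x/3) - Real.log (x^2+2*x/3+1) := by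
        rw [h1p, Real.log_div hB.ne' hA.ne']
      rw [hlogp, hlog1p] at hmul
      -- expand the A * (p * ...) products
      have hAp : (x^2+2*x/3+1) * (x^2/(x^2+2*x/3+1)) = x^2 := by
        rw [mul_div_cancel₀ _ hA.ne']
      have hA1p : (x^2+2*x/3+1) * (1 - x^2/(x^2+2*x/3+1)) = 1+2*x/3 := by
        rw [h1p, mul_div_cancel₀ _ hA.ne']
      have e5 : (x^2+2*x/3+1) * ((x^2/(x^2+2*x/3+1))*(Real.log s - (Real.log (x^2) - Real.log (x^2+2*x/3+1)))
            + (1 - x^2/(x^2+2*x/3+1))*(-(Real.log (1+2*x/3) - Real.log (x^2+2*x/3+1))))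
          = x^2*Real.log s - x^2*Real.log (x^2) + x^2*Real.log (x^2+2*x/3+1)
            - (1+2*x/3)*Real.log (1+2*x/3) + (1+2*x/3)*Real.log (x^2+2*x/3+1) := by
        have expand : (x^2+2*x/3+1) * ((x^2/(x^2+2*x/3+1))*(Real.log s - (Real.log (x^2) - Real.log (x^2+2*x/3+1)))
            + (1 - x^2/(x^2+2*x/3+1))*(-(Real.log (1+2*x/3) - Real.log (x^2+2*x/3+1))))
          = ((x^2+2*x/3+1) * (x^2/(x^2+2*x/3+1)))*(Real.log s - (Real.log (x^2) - Real.log (x^2+2*x/3+1)))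
            + ((x^2+2*x/3+1) * (1 - x^2/(x^2+2*x/3+1)))*(-(Real.log (1+2*x/3) - Real.log (x^2+2*x/3+1))) := by
          ring
        rw [expand, hAp, hA1p]
        ring
      rw [e5] at hmul
      -- now the goal
      have hfin := lsP0_nonpos hx1
      unfold lsP0 at hfin
      have hgoal1 : Real.log ((1+x)^2/(1+s)) = 2*Real.log (1+x) - Real.log (1+s) := by
        rw [Real.log_div (pow_ne_zero 2 h1x.ne') h1s.ne', Real.log_pow]
        push_cast
        ring
      have hgoal2 : Real.log (x^2/s) = Real.log (x^2) - Real.log s :=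
        Real.log_div hx2.ne' hs.ne'
      rw [hgoal1, hgoal2]
      nlinarith [hmul, hfin]

lemma lsE1 {q c : ℝ} (hq : 2 < q) (hc : 0 < c) (y : ℝ) :
    y^2 * Real.log (y^2/c) ≤ (2/(q-2)) * (|y|^q/c^((q-2)/2) - y^2) := by
  have hν : (0:ℝ) < (q-2)/2 := by linarith
  rcases eq_or_ne y 0 with hy | hy
  · subst hy
    simp [Real.zero_rpow (by positivity : q ≠ 0)]
  · have hy2 : (0:ℝ) < y^2 := by positivity
    have hay : (0:ℝ) < |y| := abs_pos.mpr hy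
    have hu : (0:ℝ) < y^2/c := div_pos hy2 hc
    have huν : (0:ℝ) < (y^2/c)^((q-2)/2) := Real.rpow_pos_of_pos hu _
    have hlog : ((q-2)/2) * Real.log (y^2/c) ≤ (y^2/c)^((q-2)/2) - 1 := by
      rw [← Real.log_rpow hu]
      exact Real.log_le_sub_one_of_pos huν
    -- identify (y^2/c)^((q-2)/2) * y^2 = |y|^q / c^((q-2)/2)
    have h1 : (y^2:ℝ) = |y|^(2:ℝ) := by
      rw [show ((2:ℝ)) = ((2:ℕ):ℝ) by norm_num, Real.rpow_natCast, sq_abs]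
    have hnum : y^2 * (y^2)^((q-2)/2) = |y|^q := by
      calc y^2 * (y^2)^((q-2)/2) = |y|^(2:ℝ) * (|y|^(2:ℝ))^((q-2)/2) := by rw [h1]
        _ = |y|^(2:ℝ) * |y|^((2:ℝ)*((q-2)/2)) := by rw [← Real.rpow_mul (abs_nonneg y)]
        _ = |y|^((2:ℝ) + 2*((q-2)/2)) := by rw [← Real.rpow_add hay]
        _ = |y|^q := by rw [show (2:ℝ) + 2*((q-2)/2) = q by ring]
    have hid : y^2 * (y^2/c)^((q-2)/2) = |y|^q/c^((q-2)/2) := by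
      rw [Real.div_rpow hy2.le hc.le, mul_div_assoc', hnum]
    -- multiply hlog by y^2/ν
    have h2 : y^2 * Real.log (y^2/c) ≤ y^2 * (((y^2/c)^((q-2)/2) - 1) / ((q-2)/2)) := by
      apply mul_le_mul_of_nonneg_left _ hy2.le
      rw [le_div_iff₀ hν]
      linarith [hlog]
    calc y^2 * Real.log (y^2/c) ≤ y^2 * (((y^2/c)^((q-2)/2) - 1) / ((q-2)/2)) := h2
      _ = (2/(q-2)) * (y^2 * (y^2/c)^((q-2)/2) - y^2) := by
          field_simp
      _ = (2/(q-2)) * (|y|^q/c^((q-2)/2) - y^2) := by rw [hid]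

lemma lsLB {c : ℝ} (hc : 0 < c) (y : ℝ) : -c ≤ y^2*Real.log (y^2/c) := by
  rcases eq_or_ne y 0 with hy | hy
  · subst hy; simp; positivity
  · have hy2 : (0:ℝ) < y^2 := by positivity
    have h1 : Real.log (c/y^2) ≤ c/y^2 - 1 := Real.log_le_sub_one_of_pos (div_pos hc hy2)
    have h2 : Real.log (y^2/c) = -Real.log (c/y^2) := by
      rw [← Real.log_inv, inv_div]
    rw [h2]
    have h3 : y^2 * Real.log (c/y^2) ≤ y^2 * (c/y^2 - 1) :=
      mul_le_mul_of_nonneg_left h1 hy2.le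
    have h4 : y^2 * (c/y^2 - 1) = c - y^2 := by
      field_simp
    nlinarith [hy2]

lemma lsIntGlog {α : Type*} [MeasurableSpace α] {μ : Measure α} [IsProbabilityMeasure μ]
    {g : α → ℝ} (hgm : Measurable g) {q c : ℝ} (hq : 2 < q) (hc : 0 < c)
    (hgq : Integrable (fun ω => |g ω|^q) μ) :
    Integrable (fun ω => g ω^2 * Real.log (g ω^2/c)) μ := by
  have hν : (0:ℝ) < c^((q-2)/2) := Real.rpow_pos_of_pos hc _
  have hcoef : (0:ℝ) ≤ (2/(q-2))/c^((q-2)/2) := by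
    apply div_nonneg _ hν.le
    apply div_nonneg (by norm_num) (by linarith)
  apply Integrable.mono' ((hgq.const_mul ((2/(q-2))/c^((q-2)/2))).add (integrable_const c))
  · exact (((hgm.pow_const 2).mul ((Real.measurable_log).comp
      ((hgm.pow_const 2).div_const c)))).aestronglyMeasurable
  · apply Filter.Eventually.of_forall
    intro ω
    simp only [Pi.add_apply]
    rw [Real.norm_eq_abs, abs_le]
    constructor
    · have h1 := lsLB hc (g ω)
      have h2 : (0:ℝ) ≤ ((2/(q-2))/c^((q-2)/2)) * |g ω|^q := by
        apply mul_nonneg hcoef (Real.rpow_nonneg (abs_nonneg _) q)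
      linarith
    · have h1 := lsE1 hq hc (g ω)
      have h2 : (2/(q-2)) * (|g ω|^q/c^((q-2)/2) - g ω^2)
          ≤ ((2/(q-2))/c^((q-2)/2)) * |g ω|^q + c := by
        have h3 : (0:ℝ) ≤ (2/(q-2)) * g ω^2 := by
          apply mul_nonneg (by apply div_nonneg (by norm_num); linarith) (sq_nonneg _)
        have h4 : (2/(q-2)) * (|g ω|^q/c^((q-2)/2)) = ((2/(q-2))/c^((q-2)/2)) * |g ω|^q := by
          field_simp
          try ring
        nlinarith [h4, hc]
      linarith

lemma lsQuot {b z w : ℝ} (hb : b ≠ 0) (hw : w ≠ 0) : (z/b)/(w/b) = z/w := by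
  rw [div_div_eq_mul_div, div_mul_cancel₀ _ hb]


theorem logSob_starting_point {α : Type*} [MeasurableSpace α] (μ : Measure α)
    [IsProbabilityMeasure μ] (f : α → ℝ) (hf_meas : Measurable f)
    (hf_nonneg : ∀ x, 0 ≤ f x) (q : ℝ) (hq : 2 < q)
    (hfq : Integrable (fun x => |f x - ∫ y, f y ∂μ| ^ q) μ)
    (hf2 : Integrable (fun x => (f x) ^ 2) μ)
    (hf1 : Integrable f μ)
    (hpos : 0 < ∫ x, (f x) ^ 2 ∂μ)
    (hent : Integrable (fun x => (f x) ^ 2 * Real.log ((f x) ^ 2 / ∫ y, (f y) ^ 2 ∂μ)) μ) :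
    ∫ x, (f x) ^ 2 * Real.log ((f x) ^ 2 / ∫ y, (f y) ^ 2 ∂μ) ∂μ ≤
      (q / (q - 2)) * ((∫ x, |f x - ∫ y, f y ∂μ| ^ q ∂μ) ^ (1 / q)) ^ 2 +
      ((q - 4) / (q - 2)) * ∫ x, |f x - ∫ y, f y ∂μ| ^ 2 ∂μ := by
  have hq0 : (0:ℝ) < q := by linarith
  have hq2 : q - 2 ≠ 0 := by linarith
  set a := ∫ y, f y ∂μ with ha_def
  set N := ∫ y, (f y)^2 ∂μ with hN_def
  have hgm : Measurable (fun ω => f ω - a) := hf_meas.sub measurable_const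
  have hgint : Integrable (fun ω => f ω - a) μ := hf1.sub (integrable_const a)
  have hg2eq : (fun ω => (f ω - a)^2) = fun ω => f ω^2 - (2*a)*f ω + a^2 := by
    funext ω; ring
  have hg2int : Integrable (fun ω => (f ω - a)^2) μ := by
    rw [hg2eq]
    exact (hf2.sub (hf1.const_mul (2*a))).add (integrable_const _)
  have hgmean : ∫ ω, (f ω - a) ∂μ = 0 := by
    rw [integral_sub hf1 (integrable_const a), integral_const]
    simp [← ha_def]
  set S := ∫ ω, (f ω - a)^2 ∂μ with hS_def
  have hS_nonneg : 0 ≤ S := integral_nonneg fun ω => sq_nonneg _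
  have I3 : Integrable (fun ω => (2*a)*f ω) μ := hf1.const_mul (2*a)
  have I1 : Integrable (fun ω => f ω^2 - (2*a)*f ω) μ := hf2.sub I3
  have I2 : Integrable (fun _ : α => a^2) μ := integrable_const _
  have hSN : S = N - a^2 := by
    rw [hS_def, hg2eq, integral_add I1 I2, integral_sub hf2 I3, integral_const_mul,
      integral_const]
    simp only [measure_univ, ENNReal.toReal_one, probReal_univ, smul_eq_mul, one_mul]
    rw [← ha_def, ← hN_def]
    ring
  have ha0 : 0 ≤ a := by rw [ha_def]; exact integral_nonneg fun ω => hf_nonneg ω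
  have hNpos : 0 < N := hpos
  have hapos : 0 < a := by
    rcases ha0.lt_or_eq with h | h
    · exact h
    · exfalso
      have hf0 : f =ᵐ[μ] 0 := by
        apply (integral_eq_zero_iff_of_nonneg (fun ω => hf_nonneg ω) hf1).mp
        rw [← ha_def]; exact h.symm
      have hsq : (fun ω => f ω^2) =ᵐ[μ] (fun _ => (0:ℝ)) := hf0.mono fun ω hω => by
        simp only [Pi.zero_apply] at hω; simp [hω]
      have hN0 : N = 0 := by
        rw [hN_def, integral_congr_ae hsq, integral_const]; simp
      linarith
  have ha2ne : (a:ℝ)^2 ≠ 0 := by positivity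
  rcases hS_nonneg.lt_or_eq with hSpos | hSzero
  · -- main case
    set T := ∫ x, |f x - a|^q ∂μ with hT_def
    have hTnonneg : 0 ≤ T := by
      rw [hT_def]; exact integral_nonneg fun ω => Real.rpow_nonneg (abs_nonneg _) q
    have hTpos : 0 < T := by
      rcases hTnonneg.lt_or_eq with h | h
      · exact h
      · exfalso
        have h0 : (fun ω => |f ω - a|^q) =ᵐ[μ] (fun _ => (0:ℝ)) := by
          apply (integral_eq_zero_iff_of_nonneg (fun ω => Real.rpow_nonneg (abs_nonneg _) q) hfq).mp
          rw [← hT_def]; exact h.symm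
        have hg0 : (fun ω => (f ω - a)^2) =ᵐ[μ] (fun _ => (0:ℝ)) := h0.mono fun ω hω => by
          simp only at hω ⊢
          have habs : |f ω - a| = 0 := by
            by_contra hne
            have hpos' : 0 < |f ω - a| := lt_of_le_of_ne (abs_nonneg _) (Ne.symm hne)
            have := Real.rpow_pos_of_pos hpos' q
            linarith
          have h2 : f ω - a = 0 := abs_eq_zero.mp habs
          simp [h2]
        have hS0 : S = 0 := by
          rw [hS_def, integral_congr_ae hg0, integral_const]; simp
        linarith
    have hkeyS : 0 < S/a^2 := div_pos hSpos (by positivity)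
    have hNa : 1 + S/a^2 = N/a^2 := by
      rw [hSN]; field_simp; ring
    -- pointwise Rothaus
    have hptR : ∀ ω, f ω^2 * Real.log (f ω^2/N) ≤
        (f ω - a)^2*Real.log ((f ω - a)^2/S) + 2*(f ω - a)^2
          + (a*(2 - (4/3)*Real.log (1+S/a^2)))*(f ω - a) := by
      intro ω
      have hxge : -1 ≤ (f ω - a)/a := by
        rw [le_div_iff₀ hapos]
        have := hf_nonneg ω; linarith
      have hkey := lsKey hkeyS hxge
      have hmul := mul_le_mul_of_nonneg_left hkey (by positivity : (0:ℝ) ≤ a^2)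
      have e1 : 1 + (f ω - a)/a = f ω/a := by field_simp; ring
      have eL : a^2*((1 + (f ω - a)/a)^2 * Real.log ((1 + (f ω - a)/a)^2/(1+S/a^2)))
          = f ω^2 * Real.log (f ω^2/N) := by
        rw [e1, div_pow, hNa, lsQuot ha2ne hNpos.ne']
        rw [show a^2*(f ω^2/a^2 * Real.log (f ω^2/N))
          = (f ω^2/a^2*a^2) * Real.log (f ω^2/N) from by ring]
        rw [div_mul_cancel₀ _ ha2ne]
      have eR : a^2*(((f ω - a)/a)^2*Real.log (((f ω - a)/a)^2/(S/a^2)) + 2*((f ω - a)/a)^2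
            + (2 - (4/3)*Real.log (1+S/a^2))*((f ω - a)/a))
          = (f ω - a)^2*Real.log ((f ω - a)^2/S) + 2*(f ω - a)^2
            + (a*(2 - (4/3)*Real.log (1+S/a^2)))*(f ω - a) := by
        rw [div_pow, lsQuot ha2ne hSpos.ne']
        field_simp
      calc f ω^2 * Real.log (f ω^2/N)
          = a^2*((1 + (f ω - a)/a)^2 * Real.log ((1 + (f ω - a)/a)^2/(1+S/a^2))) := eL.symm
        _ ≤ a^2*(((f ω - a)/a)^2*Real.log (((f ω - a)/a)^2/(S/a^2)) + 2*((f ω - a)/a)^2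
            + (2 - (4/3)*Real.log (1+S/a^2))*((f ω - a)/a)) := hmul
        _ = (f ω - a)^2*Real.log ((f ω - a)^2/S) + 2*(f ω - a)^2
            + (a*(2 - (4/3)*Real.log (1+S/a^2)))*(f ω - a) := eR
    have hIntS : Integrable (fun ω => (f ω - a)^2*Real.log ((f ω - a)^2/S)) μ :=
      lsIntGlog hgm hq hSpos hfq
    have hIntR : Integrable (fun ω => (f ω - a)^2*Real.log ((f ω - a)^2/S) + 2*(f ω - a)^2
        + (a*(2 - (4/3)*Real.log (1+S/a^2)))*(f ω - a)) μ := by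
      have h1 : Integrable (fun ω => 2*(f ω - a)^2) μ := hg2int.const_mul 2
      have h2 : Integrable (fun ω => (a*(2 - (4/3)*Real.log (1+S/a^2)))*(f ω - a)) μ :=
        hgint.const_mul _
      exact (hIntS.add h1).add h2
    have hRoth : ∫ ω, f ω^2 * Real.log (f ω^2/N) ∂μ
        ≤ (∫ ω, (f ω - a)^2*Real.log ((f ω - a)^2/S) ∂μ) + 2*S := by
      have h1 := integral_mono hent hIntR hptR
      have I4 : Integrable (fun ω => 2*(f ω - a)^2) μ := hg2int.const_mul 2
      have I5 : Integrable (fun ω => (a*(2 - (4/3)*Real.log (1+S/a^2)))*(f ω - a)) μ :=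
        hgint.const_mul _
      have I6 : Integrable (fun ω => (f ω - a)^2*Real.log ((f ω - a)^2/S) + 2*(f ω - a)^2) μ :=
        hIntS.add I4
      have h2 : ∫ ω, ((f ω - a)^2*Real.log ((f ω - a)^2/S) + 2*(f ω - a)^2
          + (a*(2 - (4/3)*Real.log (1+S/a^2)))*(f ω - a)) ∂μ
          = (∫ ω, (f ω - a)^2*Real.log ((f ω - a)^2/S) ∂μ) + 2*S := by
        rw [integral_add I6 I5, integral_add hIntS I4, integral_const_mul, integral_const_mul,
          hgmean, ← hS_def]
        ring
      rw [h2] at h1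
      exact h1
    -- entropy - Lq step
    set t2 := T^(2/q) with ht2_def
    have ht2pos : 0 < t2 := Real.rpow_pos_of_pos hTpos _
    have hsplit : ∀ ω, (f ω - a)^2*Real.log ((f ω - a)^2/S)
        = (f ω - a)^2*Real.log ((f ω - a)^2/t2) + (f ω - a)^2*Real.log (t2/S) := by
      intro ω
      rcases eq_or_ne (f ω - a) 0 with h | h
      · rw [h]; norm_num
      · have h2 : ((f ω - a)^2) ≠ 0 := pow_ne_zero 2 h
        rw [Real.log_div h2 hSpos.ne', Real.log_div h2 ht2pos.ne',
          Real.log_div ht2pos.ne' hSpos.ne']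
        ring
    have hIntT : Integrable (fun ω => (f ω - a)^2*Real.log ((f ω - a)^2/t2)) μ :=
      lsIntGlog hgm hq ht2pos hfq
    have hE1RHSint : Integrable
        (fun ω => (2/(q-2)) * (|f ω - a|^q/t2^((q-2)/2) - (f ω - a)^2)) μ :=
      ((hfq.div_const _).sub hg2int).const_mul _
    have hE1int : ∫ ω, (f ω - a)^2*Real.log ((f ω - a)^2/t2) ∂μ
        ≤ (2/(q-2)) * (T/t2^((q-2)/2) - S) := by
      have h1 := integral_mono hIntT hE1RHSint (fun ω => lsE1 hq ht2pos (f ω - a))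
      have I7 : Integrable (fun ω => |f ω - a|^q/t2^((q-2)/2)) μ := hfq.div_const _
      rwa [integral_const_mul, integral_sub I7 hg2int, integral_div,
        ← hT_def, ← hS_def] at h1
    have hT2 : T/t2^((q-2)/2) = t2 := by
      rw [div_eq_iff (ne_of_gt (Real.rpow_pos_of_pos ht2pos _))]
      rw [ht2_def, ← Real.rpow_mul hTnonneg, ← Real.rpow_add hTpos]
      rw [show 2/q + 2/q*((q-2)/2) = 1 from by field_simp; ring, Real.rpow_one]
    have hlogT : ∫ ω, (f ω - a)^2*Real.log (t2/S) ∂μ = S * Real.log (t2/S) := by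
      rw [integral_mul_const, ← hS_def]
    have hlogbound : S * Real.log (t2/S) ≤ t2 - S := by
      have h1 := Real.log_le_sub_one_of_pos (div_pos ht2pos hSpos)
      have h2 := mul_le_mul_of_nonneg_left h1 hS_nonneg
      have h3 : S*(t2/S - 1) = t2 - S := by field_simp
      linarith [h3 ▸ h2]
    have hEnt : ∫ ω, (f ω - a)^2*Real.log ((f ω - a)^2/S) ∂μ ≤ (q/(q-2))*(t2 - S) := by
      have hsum : ∫ ω, (f ω - a)^2*Real.log ((f ω - a)^2/S) ∂μ
          = (∫ ω, (f ω - a)^2*Real.log ((f ω - a)^2/t2) ∂μ)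
            + (∫ ω, (f ω - a)^2*Real.log (t2/S) ∂μ) := by
        rw [← integral_add hIntT (hg2int.mul_const _)]
        exact integral_congr_ae (Filter.Eventually.of_forall hsplit)
      rw [hsum, hlogT]
      have h1 := hE1int
      rw [hT2] at h1
      have hco : (2/(q-2))*(t2-S) + (t2-S) = (q/(q-2))*(t2-S) := by
        field_simp
        ring
      linarith
    have hfinal : ∫ ω, f ω^2 * Real.log (f ω^2/N) ∂μ ≤ (q/(q-2))*t2 + ((q-4)/(q-2))*S := by
      have hco : (q/(q-2))*(t2 - S) + 2*S = (q/(q-2))*t2 + ((q-4)/(q-2))*S := by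
        field_simp
        ring
      linarith [hRoth, hEnt]
    have habs2' : ∫ x, |f x - a|^2 ∂μ = S := by
      rw [hS_def]
      exact integral_congr_ae (Filter.Eventually.of_forall fun x => sq_abs _)
    have hgoalT : ((T)^(1/q))^2 = t2 := by
      rw [ht2_def, ← Real.rpow_natCast (T^(1/q)) 2, ← Real.rpow_mul hTnonneg,
        show 1/q*((2:ℕ):ℝ) = 2/q from by push_cast; ring]
    rw [habs2', hgoalT]
    exact hfinal
  · -- degenerate case S = 0
    have hg20 : (fun ω => (f ω - a)^2) =ᵐ[μ] (fun _ => (0:ℝ)) := by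
      apply (integral_eq_zero_iff_of_nonneg (fun ω => sq_nonneg _) hg2int).mp
      rw [← hS_def]; exact hSzero.symm
    have hfa : ∀ᵐ ω ∂μ, f ω = a := hg20.mono fun ω hω => by
      simp only at hω
      have := sq_eq_zero_iff.mp hω
      linarith [this]
    have hsq2 : (fun ω => f ω^2) =ᵐ[μ] (fun _ => a^2) := hfa.mono fun ω hω => by
      show f ω^2 = a^2
      rw [hω]
    have hNa2 : N = a^2 := by
      rw [hN_def, integral_congr_ae hsq2, integral_const]
      simp
    have hLHS0 : ∫ ω, f ω^2*Real.log (f ω^2/N) ∂μ = 0 := by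
      have h1 : (fun ω => f ω^2*Real.log (f ω^2/N)) =ᵐ[μ] (fun _ => (0:ℝ)) :=
        hfa.mono fun ω hω => by
          show f ω^2*Real.log (f ω^2/N) = 0
          rw [hω, hNa2, div_self ha2ne, Real.log_one, mul_zero]
      rw [integral_congr_ae h1, integral_const]; simp
    have hT0 : ∫ x, |f x - a|^q ∂μ = 0 := by
      have h1 : (fun x => |f x - a|^q) =ᵐ[μ] (fun _ => (0:ℝ)) := hfa.mono fun ω hω => by
        show |f ω - a|^q = 0
        rw [hω, sub_self, abs_zero, Real.zero_rpow (ne_of_gt hq0)]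
      rw [integral_congr_ae h1, integral_const]; simp
    have hS20 : ∫ x, |f x - a|^2 ∂μ = 0 := by
      have h1 : (fun x => |f x - a|^2) =ᵐ[μ] (fun _ => (0:ℝ)) := hfa.mono fun ω hω => by
        show |f ω - a|^2 = 0
        rw [hω, sub_self, abs_zero]; norm_num
      rw [integral_congr_ae h1, integral_const]; simp
    rw [hLHS0, hT0, hS20]
    rw [Real.zero_rpow (ne_of_gt (by positivity : (0:ℝ) < 1/q))]
    norm_num
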